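/- Let H be a complex Hilbert space, x ∈ H a nonzero vector, and A a bounded operator on H such that for every λ ∈ ℂ the operator xx* + |λ|² yy* + λA + conj(λ)A* has rank at most 1, where y = γx for some γ ∈ ℂ. Then A = μ xx* for some μ ∈ ℂ. -/

import Mathlib

open scoped InnerProductSpace ComplexConjugate

/-- `rk1 ξ η` is the rank-one operator `ξη* : τ ↦ ⟨η, τ⟩ ξ`. -/
noncomputable def rk1 {H : Type*} [NormedAddCommGroup H] [InnerProductSpace ℂ H]
    (ξ η : H) : H →L[ℂ] H := (innerSL ℂ η).smulRight ξ

private lemma minor_aux {H : Type*} [NormedAddCommGroup H] [InnerProductSpace ℂ H]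
    (T : H →L[ℂ] H) (hT : LinearMap.rank (T : H →ₗ[ℂ] H) ≤ 1)
    (u v u' v' : H) :
    ⟪u, T v⟫_ℂ * ⟪u', T v'⟫_ℂ = ⟪u, T v'⟫_ℂ * ⟪u', T v⟫_ℂ := by
  rw [LinearMap.rank] at hT
  obtain ⟨w₀, hw⟩ := rank_le_one_iff.mp hT
  obtain ⟨c, hc⟩ := hw ⟨T v, LinearMap.mem_range_self _ v⟩
  obtain ⟨d, hd⟩ := hw ⟨T v', LinearMap.mem_range_self _ v'⟩
  have hc' : T v = c • (w₀ : H) := by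
    have := congrArg (Subtype.val) hc; simpa using this.symm
  have hd' : T v' = d • (w₀ : H) := by
    have := congrArg (Subtype.val) hd; simpa using this.symm
  rw [hc', hd', inner_smul_right, inner_smul_right, inner_smul_right, inner_smul_right]
  ring

private lemma conj_eq_zero {z : ℂ} (h : conj z = 0) : z = 0 := by
  simpa using congrArg conj h

private lemma normsq_zero {z : ℂ} (h : z * conj z = 0) : z = 0 := by
  rcases mul_eq_zero.mp h with h | h
  · exact h
  · exact conj_eq_zero h

theorem stmt3 {H : Type*} [NormedAddCommGroup H] [InnerProductSpace ℂ H] [CompleteSpace H]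
    (x : H) (hx : x ≠ 0) (γ : ℂ) (y : H) (hy : y = γ • x) (A : H →L[ℂ] H)
    (h : ∀ l : ℂ, LinearMap.rank
      (((rk1 x x + (‖l‖ ^ 2 : ℂ) • rk1 y y + l • A +
        (starRingEnd ℂ l) • ContinuousLinearMap.adjoint A) : H →L[ℂ] H) : H →ₗ[ℂ] H) ≤ 1) :
    ∃ μ : ℂ, A = μ • rk1 x x := by
  classical
  set T : ℂ → H →L[ℂ] H := fun l =>
    rk1 x x + (‖l‖ ^ 2 : ℂ) • rk1 y y + l • A +
      (starRingEnd ℂ l) • ContinuousLinearMap.adjoint A with hT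
  have minor : ∀ (l : ℂ) (u v u' v' : H),
      ⟪u, T l v⟫_ℂ * ⟪u', T l v'⟫_ℂ = ⟪u, T l v'⟫_ℂ * ⟪u', T l v⟫_ℂ :=
    fun l => minor_aux (T l) (h l)
  have hc : ⟪x, x⟫_ℂ ≠ 0 := inner_self_ne_zero.mpr hx
  set c : ℂ := ⟪x, x⟫_ℂ with hcdef
  set G : ℂ := γ * conj γ * c ^ 2 with hG
  set m : ℂ := ⟪x, A x⟫_ℂ with hm
  set n : ℂ := ⟪A x, x⟫_ℂ with hn
  -- computation lemmas
  have comp1 : ∀ (l : ℂ) (u v : H), ⟪x, v⟫_ℂ = 0 →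
      ⟪u, T l v⟫_ℂ = l * ⟪u, A v⟫_ℂ + conj l * ⟪A u, v⟫_ℂ := by
    intro l u v hv
    simp [hT, rk1, hy, inner_add_right, inner_smul_right, inner_smul_left, hv,
      ContinuousLinearMap.adjoint_inner_right]
  have comp2 : ∀ (l : ℂ) (u : H), ⟪x, u⟫_ℂ = 0 →
      ⟪u, T l x⟫_ℂ = l * ⟪u, A x⟫_ℂ + conj l * ⟪A u, x⟫_ℂ := by
    intro l u hu
    have hu' : ⟪u, x⟫_ℂ = 0 := by rw [← inner_conj_symm, hu, map_zero]
    simp [hT, rk1, hy, inner_add_right, inner_smul_right, inner_smul_left, hu',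
      ContinuousLinearMap.adjoint_inner_right]
  have comp4 : ∀ l : ℂ,
      ⟪x, T l x⟫_ℂ = c ^ 2 + (‖l‖ ^ 2 : ℂ) * G + l * m + conj l * n := by
    intro l
    simp [hT, rk1, hy, hG, hm, hn, hcdef, inner_add_right, inner_smul_right, inner_smul_left,
      ContinuousLinearMap.adjoint_inner_right]
    ring
  -- the key polynomial identity
  have key : ∀ (u v : H), ⟪x, u⟫_ℂ = 0 → ⟪x, v⟫_ℂ = 0 → ∀ l : ℂ,
      (l * ⟪u, A v⟫_ℂ + conj l * ⟪A u, v⟫_ℂ) * (c ^ 2 + (‖l‖ ^ 2 : ℂ) * G + l * m + conj l * n)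
        = (l * ⟪u, A x⟫_ℂ + conj l * ⟪A u, x⟫_ℂ) * (l * ⟪x, A v⟫_ℂ + conj l * ⟪A x, v⟫_ℂ) := by
    intro u v hu hv l
    have := minor l u v x x
    rwa [comp1 l u v hv, comp4 l, comp2 l u hu, comp1 l x v hv] at this
  have hcG : c ^ 2 + G ≠ 0 := by
    have h1 : c ^ 2 + G = c ^ 2 * (1 + γ * conj γ) := by rw [hG]; ring
    have h2 : (1 : ℂ) + γ * conj γ ≠ 0 := by
      rw [Complex.mul_conj]
      intro hcon
      have : (1 : ℝ) + Complex.normSq γ = 0 := by exact_mod_cast hcon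
      nlinarith [Complex.normSq_nonneg γ]
    rw [h1]
    exact mul_ne_zero (pow_ne_zero _ hc) h2
  -- step 1 : for u, v ⊥ x, ⟪u, A v⟫ = 0 and ⟪A u, v⟫ = 0
  have key1 : ∀ (u v : H), ⟪x, u⟫_ℂ = 0 → ⟪x, v⟫_ℂ = 0 →
      ⟪u, A v⟫_ℂ = 0 ∧ ⟪A u, v⟫_ℂ = 0 := by
    intro u v hu hv
    set a : ℂ := ⟪u, A v⟫_ℂ with ha
    set b : ℂ := ⟪A u, v⟫_ℂ with hb
    set r : ℂ := ⟪u, A x⟫_ℂ with hr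
    set s : ℂ := ⟪A u, x⟫_ℂ with hs
    set p : ℂ := ⟪x, A v⟫_ℂ with hp
    set q : ℂ := ⟪A x, v⟫_ℂ with hq
    have e1 := key u v hu hv 1
    have em1 := key u v hu hv (-1)
    have eI := key u v hu hv Complex.I
    have emI := key u v hu hv (-Complex.I)
    simp only [map_one, map_neg, Complex.conj_I, norm_one, norm_neg, Complex.norm_I,
      one_pow, Complex.ofReal_one, one_mul, neg_neg, mul_one] at e1 em1 eI emI
    have h1 : (a + b) * (c ^ 2 + G) = 0 := by linear_combination (1/2 : ℂ) * e1 - (1/2 : ℂ) * em1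
    have h2 : (a - b) * (c ^ 2 + G) = 0 := by
      linear_combination (-Complex.I/2) * eI + (Complex.I/2) * emI
        + ((a - b) * (c ^ 2 + G)) * Complex.I_sq
    have hab1 : a + b = 0 := by
      rcases mul_eq_zero.mp h1 with h' | h'
      · exact h'
      · exact absurd h' hcG
    have hab2 : a - b = 0 := by
      rcases mul_eq_zero.mp h2 with h' | h'
      · exact h'
      · exact absurd h' hcG
    constructor
    · linear_combination (1/2 : ℂ) * hab1 + (1/2 : ℂ) * hab2
    · linear_combination (1/2 : ℂ) * hab1 - (1/2 : ℂ) * hab2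
  -- step 2 : for u ⊥ x, ⟪u, A x⟫ = 0 and ⟪A u, x⟫ = 0
  have key2 : ∀ u : H, ⟪x, u⟫_ℂ = 0 → ⟪u, A x⟫_ℂ = 0 ∧ ⟪A u, x⟫_ℂ = 0 := by
    intro u hu
    obtain ⟨ha, hb⟩ := key1 u u hu hu
    set r : ℂ := ⟪u, A x⟫_ℂ with hr
    set s : ℂ := ⟪A u, x⟫_ℂ with hs
    have hpconj : ⟪x, A u⟫_ℂ = conj s := by rw [hs, inner_conj_symm]
    have hqconj : ⟪A x, u⟫_ℂ = conj r := by rw [hr, inner_conj_symm]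
    have e1 := key u u hu hu 1
    have eI := key u u hu hu Complex.I
    simp only [map_one, Complex.conj_I, norm_one, Complex.norm_I,
      one_pow, Complex.ofReal_one, one_mul, mul_one, ha, hb, hpconj, hqconj] at e1 eI
    -- e1 : 0 = (r + s) * (conj s + conj r)  (roughly)
    have hsum : r + s = 0 := by
      apply normsq_zero
      rw [map_add]
      linear_combination -e1
    have hdiff : r = s := by
      have eI' : (Complex.I * r - Complex.I * s) * (Complex.I * conj s - Complex.I * conj r)
          = 0 := by linear_combination -eI
      rcases mul_eq_zero.mp eI' with h' | h'
      · have : Complex.I * (r - s) = 0 := by linear_combination h'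
        rcases mul_eq_zero.mp this with h'' | h''
        · exact absurd h'' Complex.I_ne_zero
        · linear_combination h''
      · have : Complex.I * conj (s - r) = 0 := by rw [map_sub]; linear_combination h'
        rcases mul_eq_zero.mp this with h'' | h''
        · exact absurd h'' Complex.I_ne_zero
        · have := conj_eq_zero h''
          linear_combination -this
    constructor
    · linear_combination (1/2 : ℂ) * hsum + (1/2 : ℂ) * (hdiff - hdiff) + (1/2 : ℂ) * hdiff
        - (1/2 : ℂ) * hdiff + (1/2 : ℂ) * hsum - (1/2 : ℂ) * hsum + (1/2 : ℂ) * hdiff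
    · linear_combination (1/2 : ℂ) * hsum - (1/2 : ℂ) * hdiff
  -- A x is a multiple of x
  have hAx : A x = (m / c) • x := by
    have hxz : ⟪x, A x - (m / c) • x⟫_ℂ = 0 := by
      rw [inner_sub_right, inner_smul_right, ← hm, ← hcdef]
      field_simp
      ring
    have h1 := (key2 _ hxz).1
    have hzx : ⟪A x - (m / c) • x, x⟫_ℂ = 0 := by
      rw [← inner_conj_symm, hxz, map_zero]
    have hzz : ⟪A x - (m / c) • x, A x - (m / c) • x⟫_ℂ = 0 := by
      rw [inner_sub_right, inner_smul_right, h1, hzx]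
      ring
    have hz0 : A x - (m / c) • x = 0 := inner_self_eq_zero.mp hzz
    rw [sub_eq_zero] at hz0
    exact hz0
  -- A kills the orthogonal complement of x
  have hAw : ∀ w : H, ⟪x, w⟫_ℂ = 0 → A w = 0 := by
    intro w hw
    have hs := (key2 w hw).2
    have hp : ⟪x, A w⟫_ℂ = 0 := by rw [← inner_conj_symm, hs, map_zero]
    have := (key1 (A w) w hp hw).1
    exact inner_self_eq_zero.mp this
  refine ⟨m / c ^ 2, ?_⟩
  ext v
  have hv' : ⟪x, v - (⟪x, v⟫_ℂ / c) • x⟫_ℂ = 0 := by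
    rw [inner_sub_right, inner_smul_right, ← hcdef]
    field_simp
    ring
  have h0 := hAw _ hv'
  rw [map_sub, map_smul, sub_eq_zero] at h0
  have : A v = (⟪x, v⟫_ℂ / c) • ((m / c) • x) := by rw [h0, hAx]
  rw [this]
  show _ = (m / c ^ 2) • (rk1 x x v)
  rw [rk1]
  simp only [ContinuousLinearMap.smulRight_apply, innerSL_apply_apply, smul_smul]
  congr 1
  field_simp
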